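/- For every real t with 0 < t < π, there exist a point c ∈ ℝ³ and a radius ρ > 0 such that dist(c, h(t)) = dist(c, h(−t)) = ρ and dist(c, h(s)) > ρ for every real s with s ≠ t and s ≠ −t, where h(s) = (s, cos s, sin s). That is, the sphere bitangent to the helix at h(t) and h(−t) intersects the helix only at its two points of tangency. -/

import Mathlib

noncomputable section
open scoped Classical ENNReal Pointwise
open MeasureTheory Real

/-- Points of `ℝ³` as Euclidean space. -/
abbrev E3 : Type := EuclideanSpace ℝ (Fin 3)

/-- The point `(x, y, z) ∈ ℝ³`. -/
def mk3 (x y z : ℝ) : E3 := (WithLp.equiv 2 (Fin 3 → ℝ)).symm ![x, y, z]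

/-- `p` and `q` form a Delaunay edge of the finite set `S`: they are distinct points of `S`
lying on a sphere having no point of `S` in its interior. -/
def IsDelaunayEdge (S : Finset E3) (p q : E3) : Prop :=
  p ∈ S ∧ q ∈ S ∧ p ≠ q ∧
    ∃ (c : E3) (ρ : ℝ), 0 < ρ ∧ dist c p = ρ ∧ dist c q = ρ ∧ ∀ s ∈ S, ρ ≤ dist c s

/-- The number of (unordered) Delaunay edges of `S`. -/
def delaunayEdgeCount (S : Finset E3) : ℕ :=
  Set.ncard {pq : E3 × E3 | IsDelaunayEdge S pq.1 pq.2} / 2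

/-- The minimum pairwise distance of a finite point set. -/
def minPairDist (S : Finset E3) : ℝ :=
  sInf {d : ℝ | ∃ p ∈ S, ∃ q ∈ S, p ≠ q ∧ d = dist p q}

/-- The spread of a finite point set: diameter divided by minimum pairwise distance. -/
def spread (S : Finset E3) : ℝ := Metric.diam (S : Set E3) / minPairDist S
/-- The unit-pitch helix `h(s) = (s, cos s, sin s)`. -/
def helix (s : ℝ) : E3 := mk3 s (Real.cos s) (Real.sin s)

/-- Auxiliary: `sin x / x` is strictly decreasing on `(0, π]`. -/
lemma sinc_lt {s x : ℝ} (hs : 0 < s) (hsx : s < x) (hx : x ≤ Real.pi) :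
    s * Real.sin x < x * Real.sin s := by
  have hx0 : 0 < x := hs.trans hsx
  have h := strictConcaveOn_sin_Icc.2 (Set.mem_Icc.2 ⟨le_rfl, Real.pi_pos.le⟩)
    (Set.mem_Icc.2 ⟨hx0.le, hx⟩) hx0.ne
    (show (0:ℝ) < 1 - s/x by rw [sub_pos, div_lt_one hx0]; exact hsx)
    (show (0:ℝ) < s/x by positivity) (by ring)
  simp only [smul_eq_mul, mul_zero, Real.sin_zero, zero_add] at h
  rw [div_mul_cancel₀ _ hx0.ne'] at h
  have h2 : s / x * Real.sin x < Real.sin s := by linarith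
  calc s * Real.sin x = (s / x * Real.sin x) * x := by field_simp
    _ < Real.sin s * x := mul_lt_mul_of_pos_right h2 hx0
    _ = x * Real.sin s := by ring

set_option maxHeartbeats 1000000 in
/-- Auxiliary: `x ↦ x² + (2t/sin t)·cos x` has a strict global minimum on `[0, ∞)` at `x = t`. -/
lemma helix_key {t : ℝ} (ht0 : 0 < t) (htp : t < Real.pi) {s : ℝ} (hs0 : 0 ≤ s) (hst : s ≠ t) :
    t^2 + (2*t/Real.sin t) * Real.cos t < s^2 + (2*t/Real.sin t) * Real.cos s := by
  have hsint : 0 < Real.sin t := Real.sin_pos_of_pos_of_lt_pi ht0 htp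
  set k : ℝ := 2*t/Real.sin t with hk
  have hk0 : 0 < k := by positivity
  have hs2pos : (0:ℝ) < Real.sin (t/2) :=
    Real.sin_pos_of_pos_of_lt_pi (by linarith) (by linarith [Real.pi_pos])
  have hc2pos : (0:ℝ) < Real.cos (t/2) :=
    Real.cos_pos_of_mem_Ioo ⟨by linarith [Real.pi_pos], by linarith⟩
  have hsin2 : Real.sin t = 2 * Real.sin (t/2) * Real.cos (t/2) := by
    rw [show t = 2*(t/2) by ring, Real.sin_two_mul]; ring_nf
  have hjordan : t / Real.pi < Real.sin (t/2) := by
    have := Real.mul_lt_sin (x := t/2) (by linarith) (by linarith)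
    have hpi := Real.pi_pos
    rw [div_lt_iff₀ hpi]
    calc t = (2 / Real.pi * (t/2)) * Real.pi := by field_simp
      _ < Real.sin (t/2) * Real.pi := mul_lt_mul_of_pos_right this hpi
  have hkc : k * Real.cos (t/2) < Real.pi := by
    have : k * Real.cos (t/2) = t / Real.sin (t/2) := by
      rw [hk, hsin2]; field_simp
    rw [this, div_lt_iff₀ hs2pos]
    have hpi := Real.pi_pos
    calc t = (t / Real.pi) * Real.pi := by field_simp
      _ < Real.sin (t/2) * Real.pi := mul_lt_mul_of_pos_right hjordan hpi
      _ = Real.pi * Real.sin (t/2) := by ring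
  clear_value k
  rcases le_or_gt s Real.pi with hsp | hsp
  · -- s in [0, π] : monotonicity on both sides of t
    set g : ℝ → ℝ := fun x => x^2 + k * Real.cos x with hg
    have hderiv : ∀ x : ℝ, HasDerivAt g (2*x - k * Real.sin x) x := by
      intro x
      have h1 : HasDerivAt (fun y : ℝ => y^2) (2*x) x := by
        simpa using hasDerivAt_pow 2 x
      have h2 := (Real.hasDerivAt_cos x).const_mul k
      have := h1.add h2
      exact this.congr_deriv (by ring)
    have hcont : Continuous g :=
      Continuous.add (continuous_pow 2) (continuous_const.mul Real.continuous_cos)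
    have hmono : StrictMonoOn g (Set.Icc t Real.pi) := by
      apply strictMonoOn_of_deriv_pos (convex_Icc _ _) hcont.continuousOn
      intro x hx
      rw [interior_Icc] at hx
      rw [(hderiv x).deriv]
      have hss := sinc_lt ht0 hx.1 hx.2.le
      have : k * Real.sin x < 2 * x := by
        rw [hk, div_mul_eq_mul_div, div_lt_iff₀ hsint]; nlinarith
      linarith
    have hanti : StrictAntiOn g (Set.Icc 0 t) := by
      apply strictAntiOn_of_deriv_neg (convex_Icc _ _) hcont.continuousOn
      intro x hx
      rw [interior_Icc] at hx
      rw [(hderiv x).deriv]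
      have hss := sinc_lt hx.1 hx.2 htp.le
      have : 2 * x < k * Real.sin x := by
        rw [hk, div_mul_eq_mul_div, lt_div_iff₀ hsint]; nlinarith
      linarith
    rcases lt_or_gt_of_ne hst with h | h
    · have := hanti (Set.mem_Icc.2 ⟨hs0, h.le⟩) (Set.mem_Icc.2 ⟨ht0.le, le_rfl⟩) h
      simpa [hg] using this
    · have := hmono (Set.mem_Icc.2 ⟨le_rfl, htp.le⟩) (Set.mem_Icc.2 ⟨h.le, hsp⟩) h
      simpa [hg] using this
  · rcases le_or_gt s (2*Real.pi - t) with hs2p | hs2p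
    · -- π < s ≤ 2π - t
      have hcsc : Real.cos t - Real.cos s
          = 2 * Real.sin ((s+t)/2) * Real.sin ((s-t)/2) := by
        rw [Real.cos_sub_cos, show (t-s)/2 = -((s-t)/2) by ring, Real.sin_neg,
          show (t+s)/2 = (s+t)/2 by ring]
        ring
      have h1 : Real.sin ((s-t)/2) ≤ (s-t)/2 := Real.sin_le (by linarith)
      have h1' : 0 ≤ Real.sin ((s-t)/2) :=
        Real.sin_nonneg_of_nonneg_of_le_pi (by linarith) (by linarith)
      have h2 : Real.sin ((s+t)/2) ≤ Real.cos (t/2) := by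
        have he : Real.sin ((s+t)/2) = Real.cos ((s+t-Real.pi)/2) := by
          rw [← Real.cos_pi_div_two_sub, show Real.pi/2 - (s+t)/2 = -((s+t-Real.pi)/2) by ring,
            Real.cos_neg]
        rw [he]
        exact Real.cos_le_cos_of_nonneg_of_le_pi (by linarith) (by linarith) (by linarith)
      have hbound : Real.cos t - Real.cos s ≤ Real.cos (t/2) * (s - t) := by
        rw [hcsc]
        nlinarith [mul_le_mul h2 h1 h1' hc2pos.le]
      have hA : k * (Real.cos t - Real.cos s) ≤ (k * Real.cos (t/2)) * (s - t) := by
        nlinarith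
      have hB : (k * Real.cos (t/2)) * (s-t) < Real.pi * (s-t) :=
        mul_lt_mul_of_pos_right hkc (by linarith)
      have hC : Real.pi * (s - t) < (s + t) * (s - t) :=
        mul_lt_mul_of_pos_right (by linarith) (by linarith)
      nlinarith
    · -- s > 2π - t
      have h1 : Real.cos t - Real.cos s ≤ 1 + Real.cos t := by
        linarith [Real.neg_one_le_cos s]
      have hsq : 1 + Real.cos t = 2 * Real.cos (t/2)^2 := by
        have := Real.cos_sq (t/2)
        rw [show 2*(t/2) = t by ring] at this
        linarith
      have hcs : Real.cos (t/2) ≤ (Real.pi - t)/2 := by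
        have he : Real.cos (t/2) = Real.sin ((Real.pi - t)/2) := by
          rw [← Real.sin_pi_div_two_sub, show Real.pi/2 - t/2 = (Real.pi - t)/2 by ring]
        rw [he]
        exact Real.sin_le (by linarith)
      have hk1 : k * (1 + Real.cos t) < Real.pi * (Real.pi - t) := by
        rw [hsq]
        have : k * (2 * Real.cos (t/2)^2) = 2 * (k * Real.cos (t/2)) * Real.cos (t/2) := by ring
        rw [this]
        have hb1 : (k * Real.cos (t/2)) * Real.cos (t/2) < Real.pi * Real.cos (t/2) :=
          mul_lt_mul_of_pos_right hkc hc2pos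
        have hb2 : Real.pi * Real.cos (t/2) ≤ Real.pi * ((Real.pi - t)/2) :=
          mul_le_mul_of_nonneg_left hcs Real.pi_pos.le
        nlinarith
      have hs2 : (2*Real.pi - t)^2 < s^2 := by
        have h0 : 0 < 2*Real.pi - t := by linarith [Real.pi_pos]
        nlinarith
      have hA : k * (Real.cos t - Real.cos s) ≤ k * (1 + Real.cos t) :=
        mul_le_mul_of_nonneg_left h1 hk0.le
      have hD : 4*(Real.pi*(Real.pi - t)) ≤ s^2 - t^2 := by nlinarith
      have hE : 0 < Real.pi*(Real.pi - t) := mul_pos Real.pi_pos (by linarith)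
      nlinarith [hA, hk1, hD, hE]

/-- For `0 < t < π`, the sphere bitangent to the helix at `h(t)` and `h(-t)` intersects the
helix only at its two points of tangency: there are a center `c` and radius `ρ > 0` with
`dist c (h t) = dist c (h (-t)) = ρ` and `dist c (h s) > ρ` for all `s ∉ {t, -t}`. -/
theorem bitangent_sphere_meets_helix_only_at_tangencies :
    ∀ t : ℝ, 0 < t → t < Real.pi →
      ∃ (c : E3) (ρ : ℝ), 0 < ρ ∧ dist c (helix t) = ρ ∧ dist c (helix (-t)) = ρ ∧
        ∀ s : ℝ, s ≠ t → s ≠ -t → ρ < dist c (helix s) := by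
  intro t ht0 htp
  have hsint : 0 < Real.sin t := Real.sin_pos_of_pos_of_lt_pi ht0 htp
  set a : ℝ := t / Real.sin t with ha
  have ha0 : 0 < a := by positivity
  have hdist : ∀ s : ℝ, dist (mk3 0 (-a) 0) (helix s)
      = Real.sqrt (s^2 + 2*a*Real.cos s + 1 + a^2) := by
    intro s
    rw [EuclideanSpace.dist_eq]
    simp only [mk3, helix, WithLp.equiv_symm_apply, PiLp.toLp_apply, WithLp.ofLp_toLp, Fin.sum_univ_three,
      Matrix.cons_val_zero, Matrix.cons_val_one, Matrix.head_cons,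
      Matrix.cons_val_two, Matrix.tail_cons, Real.dist_eq, sq_abs]
    congr 1
    linear_combination Real.sin_sq_add_cos_sq s
  have ha1 : 1 < a := by
    rw [ha, lt_div_iff₀ hsint]
    linarith [Real.sin_lt ht0]
  have hradpos : ∀ s : ℝ, (0:ℝ) < s^2 + 2*a*Real.cos s + 1 + a^2 := by
    intro s
    have hc := mul_le_mul_of_nonneg_left (Real.neg_one_le_cos s) ha0.le
    have hsq : 0 < (a - 1) * (a - 1) := mul_pos (by linarith) (by linarith)
    nlinarith [sq_nonneg s]
  refine ⟨mk3 0 (-a) 0, dist (mk3 0 (-a) 0) (helix t), ?_, rfl, ?_, ?_⟩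
  · rw [hdist]
    exact Real.sqrt_pos.2 (hradpos t)
  · rw [hdist, hdist, Real.cos_neg]
    congr 1
    ring
  · intro s hst hstn
    rw [hdist, hdist]
    apply Real.sqrt_lt_sqrt (hradpos t).le
    have habs : |s| ≠ t := by
      intro h
      rcases (abs_eq ht0.le).1 h with h' | h'
      · exact hst h'
      · exact hstn h'
    have hkey := helix_key ht0 htp (abs_nonneg s) habs
    rw [Real.cos_abs, sq_abs] at hkey
    have h2a : 2*a = 2*t/Real.sin t := by rw [ha]; ring
    rw [h2a]
    linarith
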